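/- Let W, Y be positive random variables, (Y₀,Y₁) an independent pair of copies of Y independent of (W₀,W₁) with W₀ =_d W₁ =_d W, and suppose Y stochastically dominates W₀Y₀ + W₁Y₁, i.e. P(Y ≥ x) ≥ P(W₀Y₀+W₁Y₁ ≥ x) for all x. Suppose there are γ > 1, c > 0, x' ∈ (0,1) with P(W ≤ x) ≤ exp(-c(-log x)^γ) for all x ≤ x'. Then for each α ∈ [1,γ) there are c_α > 0 and t_α > 0 such that E[e^{-tY}] ≤ exp(-c_α (log t)^α) for all t ≥ t_α. -/

import Mathlib

open Filter

set_option maxHeartbeats 1000000 in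
lemma nikula_iteration (G : ℝ → ℝ) (c γ d₀ : ℝ) (hc : 0 < c) (hγ1 : 1 < γ) (hd₀ : 0 < d₀)
    (hG0 : ∀ u, 0 ≤ G u)
    (hGanti : ∀ u v : ℝ, u ≤ v → G v ≤ G u)
    (hGlim : Tendsto G atTop (nhds 0))
    (hrec : ∀ u v : ℝ, d₀ ≤ u - v → G u ≤ 2 * Real.exp (-c * (u - v) ^ γ) + G v ^ 2)
    (α : ℝ) (hα1 : 1 ≤ α) (hαγ : α < γ) :
    ∃ b : ℝ, 0 < b ∧ ∃ u₀ : ℝ, 0 < u₀ ∧ ∀ u : ℝ, u₀ ≤ u → G u ≤ Real.exp (-b * u ^ α) := by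
  have hα0 : (0:ℝ) < α := lt_of_lt_of_le one_pos hα1
  set l : ℝ := (2:ℝ) ^ (1 / (2 * α)) with hl_def
  have hl1 : 1 < l := by
    rw [hl_def, Real.one_lt_rpow_iff_of_pos two_pos]
    left; exact ⟨one_lt_two, by positivity⟩
  have hl0 : (0:ℝ) < l := lt_trans one_pos hl1
  set s : ℝ := l ^ α with hs_def
  have hs1 : 1 < s := by
    rw [hs_def, Real.one_lt_rpow_iff_of_pos hl0]
    left; exact ⟨hl1, hα0⟩
  have hs0 : (0:ℝ) < s := lt_trans one_pos hs1
  have hss : s * s = 2 := by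
    rw [hs_def, ← Real.rpow_add hl0, hl_def, ← Real.rpow_mul (by norm_num : (0:ℝ) ≤ 2),
      show 1 / (2*α) * (α + α) = 1 by field_simp; ring, Real.rpow_one]
  set κ : ℝ := 1 - 1/l with hκ_def
  have hκ0 : 0 < κ := by
    rw [hκ_def]
    have : 1/l < 1 := by
      rw [div_lt_one hl0]; exact hl1
    linarith
  have hκγ0 : 0 < c * κ ^ γ := by positivity
  -- the threshold from the limit
  set C₀ : ℝ := s * Real.log 2 / (s - 1) with hC₀_def
  have hlog2 : (0:ℝ) < Real.log 2 := Real.log_pos one_lt_two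
  obtain ⟨T, hT⟩ : ∃ T : ℝ, ∀ u : ℝ, T ≤ u → G u ≤ Real.exp (-C₀) := by
    have h1 : ∀ᶠ u in atTop, G u < Real.exp (-C₀) :=
      hGlim.eventually_lt_const (Real.exp_pos _)
    obtain ⟨T, hT⟩ := eventually_atTop.1 h1
    exact ⟨T, fun u hu => (hT u hu).le⟩
  set M : ℝ := (3 / (c * κ ^ γ)) ^ (1 / (γ - α)) with hM_def
  have hM0 : 0 ≤ M := by rw [hM_def]; positivity
  set u₀ : ℝ := max (max 1 T) (max (d₀ / κ) (max (Real.log 2 / (s - 1)) M)) with hu₀_def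
  have hu₀1 : (1:ℝ) ≤ u₀ := le_trans (le_max_left 1 T) (le_max_left _ _)
  have hu₀0 : (0:ℝ) < u₀ := lt_of_lt_of_le one_pos hu₀1
  have hu₀T : T ≤ u₀ := le_trans (le_max_right 1 T) (le_max_left _ _)
  have hu₀d : d₀ / κ ≤ u₀ := le_trans (le_max_left _ _) (le_max_right _ _)
  have hu₀log : Real.log 2 / (s - 1) ≤ u₀ :=
    le_trans (le_trans (le_max_left _ _) (le_max_right _ _)) (le_max_right _ _)
  have hu₀M : M ≤ u₀ :=
    le_trans (le_trans (le_max_right _ _) (le_max_right _ _)) (le_max_right _ _)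
  set b : ℝ := Real.log 2 / ((s - 1) * u₀ ^ α) with hb_def
  have hu₀α0 : (0:ℝ) < u₀ ^ α := Real.rpow_pos_of_pos hu₀0 α
  have hb0 : 0 < b := div_pos hlog2 (mul_pos (by linarith) hu₀α0)
  have hbu₀ : b * u₀ ^ α = Real.log 2 / (s - 1) := by
    rw [hb_def, div_mul_eq_mul_div, mul_comm (s-1) (u₀ ^ α), ← div_div,
      mul_div_assoc, div_self (ne_of_gt hu₀α0), mul_one]
  have hb1 : b ≤ 1 := by
    rw [hb_def, div_le_one (mul_pos (by linarith : (0:ℝ) < s - 1) hu₀α0)]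
    have h1 : u₀ ≤ u₀ ^ α := by
      calc u₀ = u₀ ^ (1:ℝ) := (Real.rpow_one u₀).symm
      _ ≤ u₀ ^ α := Real.rpow_le_rpow_of_exponent_le hu₀1 hα1
    have h2 : Real.log 2 ≤ (s-1) * u₀ := by
      rw [← div_le_iff₀' (by linarith)]
      exact hu₀log
    calc Real.log 2 ≤ (s-1) * u₀ := h2
    _ ≤ (s-1) * u₀ ^ α := mul_le_mul_of_nonneg_left h1 (by linarith)
  -- rpow monotonicity facts
  have hpowmono : ∀ u : ℝ, u₀ ≤ u → u₀ ^ α ≤ u ^ α :=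
    fun u hu => Real.rpow_le_rpow hu₀0.le hu hα0.le
  -- the main induction
  have main : ∀ n : ℕ, ∀ u : ℝ, u₀ ≤ u → u ≤ l ^ (n+1) * u₀ → G u ≤ Real.exp (-b * u ^ α) := by
    intro n
    induction n with
    | zero =>
      intro u hu1 hu2
      rw [pow_one] at hu2
      have h1 : G u ≤ Real.exp (-C₀) := le_trans (hGanti u₀ u hu1) (hT u₀ hu₀T)
      refine le_trans h1 (Real.exp_le_exp.2 ?_)
      -- -C₀ ≤ -b * u^α, i.e. b * u^α ≤ C₀
      have h2 : u ^ α ≤ (l * u₀) ^ α := Real.rpow_le_rpow (by linarith) hu2 hα0.le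
      have h3 : (l * u₀) ^ α = s * u₀ ^ α := by
        rw [Real.mul_rpow hl0.le hu₀0.le, hs_def]
      have h4 : b * u ^ α ≤ s * (b * u₀ ^ α) := by
        calc b * u ^ α ≤ b * (l * u₀) ^ α := mul_le_mul_of_nonneg_left h2 hb0.le
        _ = s * (b * u₀ ^ α) := by rw [h3]; ring
      rw [hbu₀] at h4
      rw [hC₀_def]
      have : s * (Real.log 2 / (s-1)) = s * Real.log 2 / (s-1) := by ring
      linarith [h4, this]
    | succ n ih =>
      intro u hu1 hu2
      by_cases hcase : u ≤ l ^ (n+1) * u₀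
      · exact ih u hu1 hcase
      push_neg at hcase
      have hln1 : l ≤ l ^ (n+1) := by
        calc l = l ^ (1:ℕ) := (pow_one l).symm
        _ ≤ l ^ (n+1) := pow_le_pow_right₀ hl1.le (by omega)
      have hul : l * u₀ < u :=
        lt_of_le_of_lt (mul_le_mul_of_nonneg_right hln1 hu₀0.le) hcase
      have hu0 : (0:ℝ) < u := lt_trans (mul_pos hl0 hu₀0) hul
      set v : ℝ := u / l with hv_def
      have hv1 : u₀ ≤ v := by
        rw [hv_def, le_div_iff₀ hl0]
        calc u₀ * l ≤ u₀ * l ^ (n+1) := mul_le_mul_of_nonneg_left hln1 hu₀0.le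
        _ = l ^ (n+1) * u₀ := mul_comm _ _
        _ ≤ u := hcase.le
      have hv2 : v ≤ l ^ (n+1) * u₀ := by
        rw [hv_def, div_le_iff₀ hl0]
        calc u ≤ l ^ (n+2) * u₀ := hu2
        _ = l ^ (n+1) * u₀ * l := by ring
      have huv : u - v = κ * u := by rw [hv_def, hκ_def]; field_simp
      have hdle : d₀ ≤ u - v := by
        rw [huv]
        have h1 : d₀ ≤ κ * u₀ := by
          rw [div_le_iff₀ hκ0] at hu₀d; linarith
        calc d₀ ≤ κ * u₀ := h1
        _ ≤ κ * u := mul_le_mul_of_nonneg_left hu1 hκ0.le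
      have hGv : G v ≤ Real.exp (-b * v ^ α) := ih v hv1 hv2
      have hrec' := hrec u v hdle
      set B : ℝ := b * u ^ α with hB_def
      have hB0 : 0 < B := mul_pos hb0 (Real.rpow_pos_of_pos hu0 α)
      have hBlb : Real.log 2 / (s-1) ≤ B := by
        rw [hB_def, ← hbu₀]
        exact mul_le_mul_of_nonneg_left (hpowmono u hu1) hb0.le
      have huα1 : (1:ℝ) ≤ u ^ α := by
        calc (1:ℝ) ≤ u₀ ^ α := Real.one_le_rpow hu₀1 hα0.le
        _ ≤ u ^ α := hpowmono u hu1
      -- term 2 bound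
      have hterm2 : G v ^ 2 ≤ (1/2) * Real.exp (-B) := by
        have h1 : G v ^ 2 ≤ Real.exp (-b * v ^ α) ^ 2 :=
          pow_le_pow_left₀ (hG0 v) hGv 2
        have hvα : v ^ α = u ^ α / s := by
          rw [hv_def, Real.div_rpow hu0.le hl0.le, hs_def]
        have h2 : Real.exp (-b * v ^ α) ^ 2 = Real.exp (-(2 * (b * v ^ α))) := by
          rw [sq, ← Real.exp_add]; ring_nf
        have h3 : 2 * (b * v ^ α) = s * B := by
          rw [hvα, hB_def, ← hss]; field_simp
        have h4 : B + Real.log 2 ≤ s * B := by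
          have h4a : Real.log 2 ≤ (s - 1) * B := by
            rw [← div_le_iff₀' (by linarith)]
            exact hBlb
          have h4b : (s - 1) * B = s * B - B := by ring
          linarith
        have h5 : Real.exp (-(s*B)) ≤ Real.exp (-(B + Real.log 2)) :=
          Real.exp_le_exp.2 (by linarith)
        have h6 : Real.exp (-(B + Real.log 2)) = (1/2) * Real.exp (-B) := by
          rw [neg_add, Real.exp_add, Real.exp_neg (Real.log 2), Real.exp_log two_pos]; ring
        calc G v ^ 2 ≤ Real.exp (-(s*B)) := by rw [← h3, ← h2]; exact h1
        _ ≤ (1/2) * Real.exp (-B) := by rw [h6] at h5; exact h5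
      -- term 1 bound
      have hterm1 : 2 * Real.exp (-c * (u - v) ^ γ) ≤ (1/2) * Real.exp (-B) := by
        have hκuγ : (u - v) ^ γ = κ ^ γ * u ^ γ := by
          rw [huv, Real.mul_rpow hκ0.le hu0.le]
        have huγ : u ^ γ = u ^ (γ - α) * u ^ α := by
          rw [← Real.rpow_add hu0]; ring_nf
        have hMγα : M ^ (γ - α) = 3 / (c * κ ^ γ) := by
          rw [hM_def, ← Real.rpow_mul (by positivity), one_div,
            inv_mul_cancel₀ (by linarith : γ - α ≠ 0), Real.rpow_one]
        have hugeM : 3 / (c * κ ^ γ) ≤ u ^ (γ - α) := by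
          calc 3 / (c * κ ^ γ) = M ^ (γ - α) := hMγα.symm
          _ ≤ u₀ ^ (γ - α) := Real.rpow_le_rpow hM0 hu₀M (by linarith)
          _ ≤ u ^ (γ - α) := Real.rpow_le_rpow hu₀0.le hu1 (by linarith)
        have h3uα : B + 2 * Real.log 2 ≤ c * (u-v) ^ γ := by
          have hge : 3 * u ^ α ≤ c * (u-v) ^ γ := by
            rw [hκuγ, huγ]
            have h8 : 3 ≤ c * κ ^ γ * u ^ (γ - α) := by
              rw [div_le_iff₀ hκγ0] at hugeM; linarith
            have h9 : 3 * u ^ α ≤ (c * κ ^ γ * u ^ (γ - α)) * u ^ α :=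
              mul_le_mul_of_nonneg_right h8 (by positivity)
            exact le_of_le_of_eq h9 (by ring)
          have hlog2le1 : Real.log 2 ≤ 1 := by
            have := Real.log_le_sub_one_of_pos two_pos; linarith
          have hBle : B ≤ u ^ α := by
            rw [hB_def]
            calc b * u ^ α ≤ 1 * u ^ α :=
              mul_le_mul_of_nonneg_right hb1 (by linarith)
            _ = u ^ α := one_mul _
          linarith
        have : Real.exp (-c * (u-v)^γ) ≤ Real.exp (-(B + 2 * Real.log 2)) :=
          Real.exp_le_exp.2 (by linarith)
        have heq : Real.exp (-(B + 2 * Real.log 2)) = (1/4) * Real.exp (-B) := by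
          have h42 : Real.exp (2 * Real.log 2) = 4 := by
            rw [two_mul, Real.exp_add, Real.exp_log two_pos]; norm_num
          rw [neg_add, Real.exp_add, Real.exp_neg (2 * Real.log 2), h42]; ring
        rw [heq] at this
        linarith
      rw [hB_def] at hterm1 hterm2
      calc G u ≤ 2 * Real.exp (-c * (u - v) ^ γ) + G v ^ 2 := hrec'
      _ ≤ (1/2) * Real.exp (-(b * u ^ α)) + (1/2) * Real.exp (-(b * u ^ α)) :=
          add_le_add hterm1 hterm2
      _ = Real.exp (-b * u ^ α) := by rw [neg_mul]; ring
  refine ⟨b, hb0, u₀, hu₀0, fun u hu => ?_⟩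
  obtain ⟨n, hn⟩ := pow_unbounded_of_one_lt (u / u₀) hl1
  refine main n u hu ?_
  rw [div_lt_iff₀ hu₀0] at hn
  have h2 : l ^ n * u₀ ≤ l ^ (n+1) * u₀ :=
    mul_le_mul_of_nonneg_right (pow_le_pow_right₀ hl1.le (by omega)) hu₀0.le
  linarith


open MeasureTheory

lemma nikula_lap_dom {Ω : Type*} [MeasurableSpace Ω] (μ : Measure Ω) [IsProbabilityMeasure μ]
    (f g : Ω → ℝ) (hf : Measurable f) (hg : Measurable g)
    (hg0 : 0 ≤ᵐ[μ] g)
    (hdom : ∀ x : ℝ, μ {ω | x ≤ g ω} ≤ μ {ω | x ≤ f ω})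
    (t : ℝ) (ht : 0 < t) :
    ∫ ω, Real.exp (-t * f ω) ∂μ ≤ ∫ ω, Real.exp (-t * g ω) ∂μ := by
  have hfm : Measurable fun ω => Real.exp (-t * f ω) :=
    Real.measurable_exp.comp (measurable_const.mul hf)
  have hgm : Measurable fun ω => Real.exp (-t * g ω) :=
    Real.measurable_exp.comp (measurable_const.mul hg)
  have hfnn : 0 ≤ᵐ[μ] fun ω => Real.exp (-t * f ω) :=
    Filter.Eventually.of_forall fun ω => (Real.exp_pos _).le
  have hgnn : 0 ≤ᵐ[μ] fun ω => Real.exp (-t * g ω) :=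
    Filter.Eventually.of_forall fun ω => (Real.exp_pos _).le
  rw [integral_eq_lintegral_of_nonneg_ae hfnn hfm.aestronglyMeasurable,
    integral_eq_lintegral_of_nonneg_ae hgnn hgm.aestronglyMeasurable]
  have key : ∫⁻ ω, ENNReal.ofReal (Real.exp (-t * f ω)) ∂μ ≤
      ∫⁻ ω, ENNReal.ofReal (Real.exp (-t * g ω)) ∂μ := by
    rw [lintegral_eq_lintegral_meas_lt μ hfnn hfm.aemeasurable,
      lintegral_eq_lintegral_meas_lt μ hgnn hgm.aemeasurable]
    refine lintegral_mono_ae ((ae_restrict_iff' measurableSet_Ioi).2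
      (Filter.Eventually.of_forall fun s hs => ?_))
    have hs0 : (0:ℝ) < s := hs
    have hset : ∀ h : Ω → ℝ, {a | s < Real.exp (-t * h a)} = {a | -Real.log s / t ≤ h a}ᶜ := by
      intro h
      ext a
      simp only [Set.mem_setOf_eq, Set.mem_compl_iff, not_le]
      rw [lt_div_iff₀ ht, show -t * h a = -(h a * t) by ring,
        ← Real.log_lt_iff_lt_exp hs0]
      constructor <;> intro h' <;> linarith
    rw [hset f, hset g]
    have hmf : MeasurableSet {a | -Real.log s / t ≤ f a} :=
      measurableSet_le measurable_const hf
    have hmg : MeasurableSet {a | -Real.log s / t ≤ g a} :=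
      measurableSet_le measurable_const hg
    rw [prob_compl_eq_one_sub hmf, prob_compl_eq_one_sub hmg]
    exact tsub_le_tsub_left (hdom (-Real.log s / t)) 1
  have hfin : ∫⁻ ω, ENNReal.ofReal (Real.exp (-t * g ω)) ∂μ ≠ ⊤ := by
    have hb : ∫⁻ ω, ENNReal.ofReal (Real.exp (-t * g ω)) ∂μ ≤ 1 := by
      have : ∀ᵐ ω ∂μ, ENNReal.ofReal (Real.exp (-t * g ω)) ≤ 1 := by
        filter_upwards [hg0] with ω hω
        refine ENNReal.ofReal_le_one.2 (Real.exp_le_one_iff.2 ?_)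
        have : 0 ≤ t * g ω := mul_nonneg ht.le hω
        linarith
      calc ∫⁻ ω, ENNReal.ofReal (Real.exp (-t * g ω)) ∂μ ≤ ∫⁻ _, 1 ∂μ := lintegral_mono_ae this
      _ = 1 := by simp
    exact ne_top_of_le_ne_top ENNReal.one_ne_top hb
  exact ENNReal.toReal_mono hfin key

open MeasureTheory ProbabilityTheory
open scoped ENNReal

set_option maxHeartbeats 1000000 in
/-- Nikula's small-ball theorem: if `Y ⪰ W₀Y₀ + W₁Y₁` (smoothing inequality) with
`(Y₀,Y₁)` an independent pair of copies of `Y` independent of `(W₀,W₁)`, copies of `W`,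
and `W` has the small-tail bound `P(W ≤ x) ≤ exp(-c(-log x)^γ)`, then for every
`α ∈ [1, γ)` the Laplace transform satisfies `E[e^{-tY}] ≤ exp(-c_α (log t)^α)`
for all large `t`. -/
theorem nikula_laplace_bound {Ω : Type*} [MeasurableSpace Ω]
    (μ : Measure Ω) [IsProbabilityMeasure μ]
    (W Y W₀ W₁ Y₀ Y₁ : Ω → ℝ)
    (hWm : Measurable W) (hYm : Measurable Y)
    (hW₀m : Measurable W₀) (hW₁m : Measurable W₁)
    (hY₀m : Measurable Y₀) (hY₁m : Measurable Y₁)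
    (hYpos : ∀ᵐ ω ∂μ, 0 < Y ω) (hWpos : ∀ᵐ ω ∂μ, 0 < W ω)
    (hY₀d : Measure.map Y₀ μ = Measure.map Y μ)
    (hY₁d : Measure.map Y₁ μ = Measure.map Y μ)
    (hW₀d : Measure.map W₀ μ = Measure.map W μ)
    (hW₁d : Measure.map W₁ μ = Measure.map W μ)
    (hYind : IndepFun Y₀ Y₁ μ)
    (hYWind : IndepFun (fun ω => (Y₀ ω, Y₁ ω)) (fun ω => (W₀ ω, W₁ ω)) μ)
    (hdom : ∀ x : ℝ, μ {ω | x ≤ W₀ ω * Y₀ ω + W₁ ω * Y₁ ω} ≤ μ {ω | x ≤ Y ω})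
    (γ c x' : ℝ) (hγ : 1 < γ) (hc : 0 < c) (hx'0 : 0 < x') (hx'1 : x' < 1)
    (htail : ∀ x : ℝ, 0 < x → x ≤ x' →
      μ {ω | W ω ≤ x} ≤ ENNReal.ofReal (Real.exp (-c * (-Real.log x) ^ γ))) :
    ∀ α : ℝ, 1 ≤ α → α < γ →
      ∃ cα : ℝ, 0 < cα ∧ ∃ tα : ℝ, 0 < tα ∧ ∀ t : ℝ, tα ≤ t →
        ∫ ω, Real.exp (-t * Y ω) ∂μ ≤ Real.exp (-cα * (Real.log t) ^ α) := by
  intro α hα1 hαγ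
  -- positivity passes to identically distributed copies
  have copy_pos : ∀ Z Z' : Ω → ℝ, Measurable Z → Measurable Z' →
      Measure.map Z' μ = Measure.map Z μ → (∀ᵐ ω ∂μ, 0 < Z ω) → (∀ᵐ ω ∂μ, 0 < Z' ω) := by
    intro Z Z' hZm hZ'm hd hZpos
    rw [ae_iff] at hZpos ⊢
    have h1 : {ω | ¬ 0 < Z' ω} = Z' ⁻¹' Set.Iic 0 := by ext ω; simp [not_lt]
    have h2 : {ω | ¬ 0 < Z ω} = Z ⁻¹' Set.Iic 0 := by ext ω; simp [not_lt]
    rw [h1, ← Measure.map_apply hZ'm measurableSet_Iic, hd,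
      Measure.map_apply hZm measurableSet_Iic, ← h2]
    exact hZpos
  have hY₀pos := copy_pos Y Y₀ hYm hY₀m hY₀d hYpos
  have hY₁pos := copy_pos Y Y₁ hYm hY₁m hY₁d hYpos
  have hW₀pos := copy_pos W W₀ hWm hW₀m hW₀d hWpos
  have hW₁pos := copy_pos W W₁ hWm hW₁m hW₁d hWpos
  -- basic measurability and integrability
  have hexpYm : ∀ r : ℝ, Measurable fun ω => Real.exp (-r * Y ω) := fun r =>
    Real.measurable_exp.comp (measurable_const.mul hYm)
  have hintexp : ∀ Z : Ω → ℝ, Measurable Z → (∀ᵐ ω ∂μ, 0 < Z ω) → ∀ r : ℝ, 0 ≤ r →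
      Integrable (fun ω => Real.exp (-r * Z ω)) μ := by
    intro Z hZm hZpos r hr
    refine (integrable_const (1:ℝ)).mono'
      (Real.measurable_exp.comp (measurable_const.mul hZm)).aestronglyMeasurable ?_
    filter_upwards [hZpos] with ω hω
    rw [Real.norm_eq_abs, abs_of_pos (Real.exp_pos _)]
    refine Real.exp_le_one_iff.2 ?_
    nlinarith [mul_nonneg hr hω.le]
  have hG0 : ∀ u : ℝ, 0 ≤ ∫ ω, Real.exp (-Real.exp u * Y ω) ∂μ := fun u =>
    integral_nonneg fun ω => (Real.exp_pos _).le
  have hGanti : ∀ u v : ℝ, u ≤ v →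
      (∫ ω, Real.exp (-Real.exp v * Y ω) ∂μ) ≤ ∫ ω, Real.exp (-Real.exp u * Y ω) ∂μ := by
    intro u v huv
    refine integral_mono_ae (hintexp Y hYm hYpos _ (Real.exp_pos v).le)
      (hintexp Y hYm hYpos _ (Real.exp_pos u).le) ?_
    filter_upwards [hYpos] with ω hω
    refine Real.exp_le_exp.2 ?_
    have h1 : Real.exp u * Y ω ≤ Real.exp v * Y ω :=
      mul_le_mul_of_nonneg_right (Real.exp_le_exp.2 huv) hω.le
    linarith
  have hGlim : Filter.Tendsto (fun u : ℝ => ∫ ω, Real.exp (-Real.exp u * Y ω) ∂μ)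
      Filter.atTop (nhds 0) := by
    have h0 : (0:ℝ) = ∫ ω, (0:ℝ) ∂μ := by simp
    rw [h0]
    refine tendsto_integral_filter_of_dominated_convergence (fun _ => (1:ℝ))
      (Filter.Eventually.of_forall fun u => (hexpYm _).aestronglyMeasurable)
      (Filter.Eventually.of_forall fun u => ?_) (integrable_const 1) ?_
    · filter_upwards [hYpos] with ω hω
      rw [Real.norm_eq_abs, abs_of_pos (Real.exp_pos _)]
      refine Real.exp_le_one_iff.2 ?_
      nlinarith [mul_nonneg (Real.exp_pos u).le hω.le]
    · filter_upwards [hYpos] with ω hω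
      have h1 : Filter.Tendsto (fun u : ℝ => Real.exp u * Y ω) Filter.atTop Filter.atTop :=
        Real.tendsto_exp_atTop.atTop_mul_const hω
      simpa using h1
  -- the smoothing recursion
  have hSm : Measurable fun ω => W₀ ω * Y₀ ω + W₁ ω * Y₁ ω :=
    (hW₀m.mul hY₀m).add (hW₁m.mul hY₁m)
  have hSpos : ∀ᵐ ω ∂μ, 0 < W₀ ω * Y₀ ω + W₁ ω * Y₁ ω := by
    filter_upwards [hY₀pos, hY₁pos, hW₀pos, hW₁pos] with ω h0 h1 h2 h3
    exact add_pos (mul_pos h2 h0) (mul_pos h3 h1)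
  have hd₀pos : 0 < -Real.log x' := by
    have := Real.log_neg hx'0 hx'1; linarith
  have hrec : ∀ u v : ℝ, -Real.log x' ≤ u - v →
      (∫ ω, Real.exp (-Real.exp u * Y ω) ∂μ) ≤
        2 * Real.exp (-c * (u - v) ^ γ) + (∫ ω, Real.exp (-Real.exp v * Y ω) ∂μ) ^ 2 := by
    intro u v huv
    set t : ℝ := Real.exp u with ht_def
    set x : ℝ := Real.exp (v - u) with hx_def
    have ht0 : 0 < t := Real.exp_pos u
    have hx0 : 0 < x := Real.exp_pos _
    have htx0 : 0 < t * x := mul_pos ht0 hx0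
    have htx : t * x = Real.exp v := by
      rw [ht_def, hx_def, ← Real.exp_add]; ring_nf
    have hxx' : x ≤ x' := by
      rw [hx_def, ← Real.exp_log hx'0]
      exact Real.exp_le_exp.2 (by linarith)
    have hlogx : -Real.log x = u - v := by rw [hx_def, Real.log_exp]; ring
    -- Step 1: stochastic domination
    have step1 : (∫ ω, Real.exp (-t * Y ω) ∂μ) ≤
        ∫ ω, Real.exp (-t * (W₀ ω * Y₀ ω + W₁ ω * Y₁ ω)) ∂μ :=
      nikula_lap_dom μ Y _ hYm hSm (hSpos.mono fun ω h => h.le) hdom t ht0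
    -- ingredients
    have hφm : Measurable fun y : ℝ => Real.exp (-(t*x) * y) :=
      Real.measurable_exp.comp (measurable_const.mul measurable_id)
    have hA₀ : MeasurableSet {ω | W₀ ω ≤ x} := measurableSet_le hW₀m measurable_const
    have hA₁ : MeasurableSet {ω | W₁ ω ≤ x} := measurableSet_le hW₁m measurable_const
    have hint0 : Integrable (fun ω => Real.exp (-(t*x) * Y₀ ω)) μ :=
      hintexp Y₀ hY₀m hY₀pos (t*x) htx0.le
    have hint1 : Integrable (fun ω => Real.exp (-(t*x) * Y₁ ω)) μ :=
      hintexp Y₁ hY₁m hY₁pos (t*x) htx0.le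
    have hintP : Integrable
        (fun ω => Real.exp (-(t*x) * Y₀ ω) * Real.exp (-(t*x) * Y₁ ω)) μ := by
      refine (integrable_const (1:ℝ)).mono'
        (((Real.measurable_exp.comp (measurable_const.mul hY₀m))).mul
          ((Real.measurable_exp.comp (measurable_const.mul hY₁m)))).aestronglyMeasurable ?_
      filter_upwards [hY₀pos, hY₁pos] with ω h0 h1
      rw [Real.norm_eq_abs, abs_of_pos (mul_pos (Real.exp_pos _) (Real.exp_pos _))]
      have e0 : Real.exp (-(t*x) * Y₀ ω) ≤ 1 :=
        Real.exp_le_one_iff.2 (by nlinarith [mul_nonneg htx0.le h0.le])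
      have e1 : Real.exp (-(t*x) * Y₁ ω) ≤ 1 :=
        Real.exp_le_one_iff.2 (by nlinarith [mul_nonneg htx0.le h1.le])
      nlinarith [Real.exp_pos (-(t*x) * Y₀ ω), Real.exp_pos (-(t*x) * Y₁ ω)]
    -- Step 2: splitting according to smallness of W₀, W₁
    have hpt : ∀ᵐ ω ∂μ, Real.exp (-t * (W₀ ω * Y₀ ω + W₁ ω * Y₁ ω)) ≤
        Set.indicator {ω | W₀ ω ≤ x} (fun _ => (1:ℝ)) ω +
          Set.indicator {ω | W₁ ω ≤ x} (fun _ => (1:ℝ)) ω +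
          Real.exp (-(t*x) * Y₀ ω) * Real.exp (-(t*x) * Y₁ ω) := by
      filter_upwards [hY₀pos, hY₁pos, hW₀pos, hW₁pos] with ω h0 h1 h2 h3
      have hind0 : 0 ≤ Set.indicator {ω | W₀ ω ≤ x} (fun _ => (1:ℝ)) ω :=
        Set.indicator_nonneg (fun _ _ => zero_le_one) ω
      have hind1 : 0 ≤ Set.indicator {ω | W₁ ω ≤ x} (fun _ => (1:ℝ)) ω :=
        Set.indicator_nonneg (fun _ _ => zero_le_one) ω
      have hP0 : 0 < Real.exp (-(t*x) * Y₀ ω) * Real.exp (-(t*x) * Y₁ ω) :=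
        mul_pos (Real.exp_pos _) (Real.exp_pos _)
      have hLHS1 : Real.exp (-t * (W₀ ω * Y₀ ω + W₁ ω * Y₁ ω)) ≤ 1 := by
        refine Real.exp_le_one_iff.2 ?_
        have := mul_pos ht0 (add_pos (mul_pos h2 h0) (mul_pos h3 h1))
        linarith
      by_cases hc0 : W₀ ω ≤ x
      · have hi : Set.indicator {ω | W₀ ω ≤ x} (fun _ => (1:ℝ)) ω = 1 :=
          Set.indicator_of_mem (show ω ∈ {ω | W₀ ω ≤ x} from hc0) (fun _ => (1:ℝ))
        rw [hi]; linarith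
      · by_cases hc1 : W₁ ω ≤ x
        · have hi : Set.indicator {ω | W₁ ω ≤ x} (fun _ => (1:ℝ)) ω = 1 :=
            Set.indicator_of_mem (show ω ∈ {ω | W₁ ω ≤ x} from hc1) (fun _ => (1:ℝ))
          rw [hi]; linarith
        · push_neg at hc0 hc1
          have hkey : Real.exp (-t * (W₀ ω * Y₀ ω + W₁ ω * Y₁ ω)) ≤
              Real.exp (-(t*x) * Y₀ ω) * Real.exp (-(t*x) * Y₁ ω) := by
            rw [← Real.exp_add]
            refine Real.exp_le_exp.2 ?_
            have k0 : x * Y₀ ω ≤ W₀ ω * Y₀ ω := mul_le_mul_of_nonneg_right hc0.le h0.le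
            have k1 : x * Y₁ ω ≤ W₁ ω * Y₁ ω := mul_le_mul_of_nonneg_right hc1.le h1.le
            have k0' : t * (x * Y₀ ω) ≤ t * (W₀ ω * Y₀ ω) :=
              mul_le_mul_of_nonneg_left k0 ht0.le
            have k1' : t * (x * Y₁ ω) ≤ t * (W₁ ω * Y₁ ω) :=
              mul_le_mul_of_nonneg_left k1 ht0.le
            nlinarith [k0', k1']
          linarith
    have hi0 : Integrable (fun ω => Set.indicator {ω | W₀ ω ≤ x} (fun _ => (1:ℝ)) ω) μ :=
      (integrable_const (1:ℝ)).indicator hA₀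
    have hi1 : Integrable (fun ω => Set.indicator {ω | W₁ ω ≤ x} (fun _ => (1:ℝ)) ω) μ :=
      (integrable_const (1:ℝ)).indicator hA₁
    have hind0eq : ∫ ω, Set.indicator {ω | W₀ ω ≤ x} (fun _ => (1:ℝ)) ω ∂μ =
        (μ {ω | W₀ ω ≤ x}).toReal := by
      rw [integral_indicator_const (1:ℝ) hA₀]; simp; rfl
    have hind1eq : ∫ ω, Set.indicator {ω | W₁ ω ≤ x} (fun _ => (1:ℝ)) ω ∂μ =
        (μ {ω | W₁ ω ≤ x}).toReal := by
      rw [integral_indicator_const (1:ℝ) hA₁]; simp; rfl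
    have step2 : (∫ ω, Real.exp (-t * (W₀ ω * Y₀ ω + W₁ ω * Y₁ ω)) ∂μ) ≤
        (μ {ω | W₀ ω ≤ x}).toReal + (μ {ω | W₁ ω ≤ x}).toReal +
          ∫ ω, Real.exp (-(t*x) * Y₀ ω) * Real.exp (-(t*x) * Y₁ ω) ∂μ := by
      have hmono := integral_mono_ae (hintexp _ hSm hSpos t ht0.le)
        ((hi0.add hi1).add hintP) hpt
      calc (∫ ω, Real.exp (-t * (W₀ ω * Y₀ ω + W₁ ω * Y₁ ω)) ∂μ) ≤
          ∫ ω, (Set.indicator {ω | W₀ ω ≤ x} (fun _ => (1:ℝ)) ω +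
            Set.indicator {ω | W₁ ω ≤ x} (fun _ => (1:ℝ)) ω +
            Real.exp (-(t*x) * Y₀ ω) * Real.exp (-(t*x) * Y₁ ω)) ∂μ := hmono
      _ = (∫ ω, Set.indicator {ω | W₀ ω ≤ x} (fun _ => (1:ℝ)) ω ∂μ) +
            (∫ ω, Set.indicator {ω | W₁ ω ≤ x} (fun _ => (1:ℝ)) ω ∂μ) +
            ∫ ω, Real.exp (-(t*x) * Y₀ ω) * Real.exp (-(t*x) * Y₁ ω) ∂μ := by
          have e2 := integral_add (hi0.add hi1) hintP
          have e3 := integral_add hi0 hi1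
          simp only [Pi.add_apply] at e2 e3
          rw [e2, e3]
      _ = (μ {ω | W₀ ω ≤ x}).toReal + (μ {ω | W₁ ω ≤ x}).toReal +
            ∫ ω, Real.exp (-(t*x) * Y₀ ω) * Real.exp (-(t*x) * Y₁ ω) ∂μ := by
          rw [hind0eq, hind1eq]
    -- Step 3: independence and identical distribution
    have hmul : (∫ ω, Real.exp (-(t*x) * Y₀ ω) * Real.exp (-(t*x) * Y₁ ω) ∂μ) =
        (∫ ω, Real.exp (-(t*x) * Y₀ ω) ∂μ) * ∫ ω, Real.exp (-(t*x) * Y₁ ω) ∂μ := by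
      have h := ProbabilityTheory.IndepFun.integral_fun_mul_eq_mul_integral (hYind.comp hφm hφm)
        (hφm.comp hY₀m).aestronglyMeasurable (hφm.comp hY₁m).aestronglyMeasurable
      simpa [Function.comp] using h
    have hφY₀ : (∫ ω, Real.exp (-(t*x) * Y₀ ω) ∂μ) = ∫ ω, Real.exp (-(t*x) * Y ω) ∂μ := by
      have e0 : (∫ ω, Real.exp (-(t*x) * Y₀ ω) ∂μ) =
          ∫ y, Real.exp (-(t*x) * y) ∂(Measure.map Y₀ μ) :=
        (integral_map hY₀m.aemeasurable hφm.aestronglyMeasurable).symm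
      have e1 : (∫ y, Real.exp (-(t*x) * y) ∂(Measure.map Y μ)) =
          ∫ ω, Real.exp (-(t*x) * Y ω) ∂μ :=
        integral_map hYm.aemeasurable hφm.aestronglyMeasurable
      rw [e0, hY₀d, e1]
    have hφY₁ : (∫ ω, Real.exp (-(t*x) * Y₁ ω) ∂μ) = ∫ ω, Real.exp (-(t*x) * Y ω) ∂μ := by
      have e0 : (∫ ω, Real.exp (-(t*x) * Y₁ ω) ∂μ) =
          ∫ y, Real.exp (-(t*x) * y) ∂(Measure.map Y₁ μ) :=
        (integral_map hY₁m.aemeasurable hφm.aestronglyMeasurable).symm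
      have e1 : (∫ y, Real.exp (-(t*x) * y) ∂(Measure.map Y μ)) =
          ∫ ω, Real.exp (-(t*x) * Y ω) ∂μ :=
        integral_map hYm.aemeasurable hφm.aestronglyMeasurable
      rw [e0, hY₁d, e1]
    -- Step 4: tail bound for the copies of W
    have htailbd : ∀ Wi : Ω → ℝ, Measurable Wi → Measure.map Wi μ = Measure.map W μ →
        (μ {ω | Wi ω ≤ x}).toReal ≤ Real.exp (-c * (u - v) ^ γ) := by
      intro Wi hWim hWid
      have h1 : μ {ω | Wi ω ≤ x} = μ {ω | W ω ≤ x} := by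
        have e0 : {ω | Wi ω ≤ x} = Wi ⁻¹' Set.Iic x := rfl
        have e1 : {ω | W ω ≤ x} = W ⁻¹' Set.Iic x := rfl
        rw [e0, e1, ← Measure.map_apply hWim measurableSet_Iic,
          ← Measure.map_apply hWm measurableSet_Iic, hWid]
      have h2 := htail x hx0 hxx'
      rw [h1, ← hlogx]
      exact ENNReal.toReal_le_of_le_ofReal (Real.exp_pos _).le h2
    -- assemble
    calc (∫ ω, Real.exp (-t * Y ω) ∂μ) ≤
        ∫ ω, Real.exp (-t * (W₀ ω * Y₀ ω + W₁ ω * Y₁ ω)) ∂μ := step1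
    _ ≤ (μ {ω | W₀ ω ≤ x}).toReal + (μ {ω | W₁ ω ≤ x}).toReal +
          ∫ ω, Real.exp (-(t*x) * Y₀ ω) * Real.exp (-(t*x) * Y₁ ω) ∂μ := step2
    _ = (μ {ω | W₀ ω ≤ x}).toReal + (μ {ω | W₁ ω ≤ x}).toReal +
          (∫ ω, Real.exp (-Real.exp v * Y ω) ∂μ) ^ 2 := by
        rw [hmul, hφY₀, hφY₁, htx, sq]
    _ ≤ 2 * Real.exp (-c * (u - v) ^ γ) +
          (∫ ω, Real.exp (-Real.exp v * Y ω) ∂μ) ^ 2 := by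
        have b0 := htailbd W₀ hW₀m hW₀d
        have b1 := htailbd W₁ hW₁m hW₁d
        linarith
  -- apply the iteration lemma
  obtain ⟨b, hb0, u₀, hu₀0, hbound⟩ := nikula_iteration
    (fun u => ∫ ω, Real.exp (-Real.exp u * Y ω) ∂μ) c γ (-Real.log x')
    hc hγ hd₀pos hG0 hGanti hGlim hrec α hα1 hαγ
  refine ⟨b, hb0, Real.exp u₀, Real.exp_pos u₀, fun t ht => ?_⟩
  have ht0 : 0 < t := lt_of_lt_of_le (Real.exp_pos u₀) ht
  have hlt : u₀ ≤ Real.log t := (Real.le_log_iff_exp_le ht0).2 ht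
  have hfin := hbound (Real.log t) hlt
  rw [Real.exp_log ht0] at hfin
  exact hfin
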